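/- Let p be a prime with p ≡ 3 (mod 4). Then there exist half-integers u_p, v_p (i.e., 2u_p, 2v_p ∈ ℤ) such that det[D_p] = u_p + v_p·i·√p. -/
import Mathlib

namespace Stmt9Aux
open Polynomial
variable {p : ℕ} [hp : Fact p.Prime]

def rep (x : ZMod p) : ℕ := min x.val (p - x.val)

lemma rep_le (hodd : p % 2 = 1) (x : ZMod p) : rep x ≤ (p - 1) / 2 := by
  have hv : x.val < p := x.val_lt
  unfold rep; omega

lemma rep_neg (x : ZMod p) : rep (-x) = rep x := by
  rcases eq_or_ne x 0 with h | h
  · simp [h]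
  · have : (-x).val = p - x.val := ZMod.val_neg_of_ne_zero x (na := ⟨h⟩)
    have hv : x.val < p := x.val_lt
    unfold rep; omega

lemma rep_cast (x : ZMod p) : ((rep x : ℕ) : ZMod p) = x ∨ ((rep x : ℕ) : ZMod p) = -x := by
  have hv : x.val < p := x.val_lt
  unfold rep
  rcases le_total x.val (p - x.val) with h | h
  · left; rw [min_eq_left h, ZMod.natCast_val, ZMod.cast_id]
  · right
    rw [min_eq_right h, Nat.cast_sub hv.le, ZMod.natCast_self, ZMod.natCast_val, ZMod.cast_id,
      zero_sub]

lemma rep_sq_cast (x : ZMod p) : (((rep x : ℕ) : ZMod p)) ^ 2 = x ^ 2 := by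
  rcases rep_cast x with h | h <;> rw [h]; ring

lemma rep_of_le (hodd : p % 2 = 1) (x : ZMod p) (hx : x.val ≤ (p - 1) / 2) :
    rep x = x.val := by
  have hv : x.val < p := x.val_lt
  have h2 : 2 ≤ p := hp.out.two_le
  unfold rep; omega

lemma rep_eq_of_pm {x y : ZMod p} (h : x = y ∨ x = -y) : rep x = rep y := by
  rcases h with h | h
  · rw [h]
  · rw [h, rep_neg]

section Perm
variable {m : ℕ}

/-- the map on Fin (m+1) induced by multiplication by s -/
def pf (hodd : p % 2 = 1) (hm : m = (p - 1) / 2) (s : ZMod p) (j : Fin (m + 1)) : Fin (m + 1) :=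
  ⟨rep (s * ((j : ℕ) : ZMod p)),
    by have := rep_le hodd (s * ((j : ℕ) : ZMod p)); omega⟩

variable (hodd : p % 2 = 1) (hm : m = (p - 1) / 2)

lemma pf_coe (s : ZMod p) (j : Fin (m + 1)) :
    ((pf hodd hm s j : ℕ) : ZMod p) = s * ((j : ℕ) : ZMod p) ∨
    ((pf hodd hm s j : ℕ) : ZMod p) = -(s * ((j : ℕ) : ZMod p)) :=
  rep_cast _

lemma pf_mul (s t : ZMod p) (j : Fin (m + 1)) :
    pf hodd hm s (pf hodd hm t j) = pf hodd hm (s * t) j := by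
  apply Fin.ext
  show rep (s * ((pf hodd hm t j : ℕ) : ZMod p)) = rep (s * t * ((j : ℕ) : ZMod p))
  apply rep_eq_of_pm
  rcases pf_coe hodd hm t j with h | h <;> rw [h]
  · left; ring
  · right; ring

lemma val_coe_fin (hm : m = (p - 1) / 2) (j : Fin (m + 1)) :
    (((j : ℕ) : ZMod p)).val = (j : ℕ) := by
  apply ZMod.val_cast_of_lt
  have h2 : 2 ≤ p := hp.out.two_le
  have := j.isLt
  omega

lemma pf_one (j : Fin (m + 1)) : pf hodd hm 1 j = j := by
  apply Fin.ext
  show rep ((1 : ZMod p) * ((j : ℕ) : ZMod p)) = (j : ℕ)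
  rw [one_mul, rep_of_le hodd _ (by rw [val_coe_fin hm]; omega), val_coe_fin hm]

lemma pf_neg_one (j : Fin (m + 1)) : pf hodd hm (-1) j = j := by
  apply Fin.ext
  show rep ((-1 : ZMod p) * ((j : ℕ) : ZMod p)) = (j : ℕ)
  have h1 : rep ((1 : ZMod p) * ((j : ℕ) : ZMod p)) = (j : ℕ) :=
    congrArg Fin.val (pf_one hodd hm j)
  rw [one_mul] at h1
  rw [neg_one_mul, rep_neg, h1]

/-- the permutation -/
def pperm (s : (ZMod p)ˣ) : Equiv.Perm (Fin (m + 1)) where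
  toFun := pf hodd hm (s : ZMod p)
  invFun := pf hodd hm ((s⁻¹ : (ZMod p)ˣ) : ZMod p)
  left_inv j := by
    rw [pf_mul, ← Units.val_mul, inv_mul_cancel]; exact pf_one hodd hm j
  right_inv j := by
    rw [pf_mul, ← Units.val_mul, mul_inv_cancel]; exact pf_one hodd hm j

lemma pperm_apply (s : (ZMod p)ˣ) (j : Fin (m + 1)) :
    pperm hodd hm s j = pf hodd hm (s : ZMod p) j := rfl

lemma pperm_mul (s t : (ZMod p)ˣ) :
    pperm hodd hm s * pperm hodd hm t = pperm hodd hm (s * t) := by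
  apply Equiv.ext; intro j
  show pf hodd hm _ (pf hodd hm _ j) = pf hodd hm _ j
  rw [pf_mul, Units.val_mul]

lemma pperm_pow (s : (ZMod p)ˣ) (k : ℕ) :
    (pperm hodd hm s) ^ k = pperm hodd hm (s ^ k) := by
  induction k with
  | zero =>
    apply Equiv.ext; intro j
    rw [pow_zero, pow_zero]
    show j = pf hodd hm ((1 : (ZMod p)ˣ) : ZMod p) j
    rw [Units.val_one, pf_one hodd hm j]
  | succ n ih =>
    rw [pow_succ, pow_succ, ih, pperm_mul]

lemma sign_pperm (hp4 : p % 4 = 3) (s : (ZMod p)ˣ) :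
    Equiv.Perm.sign (pperm hodd hm s) = 1 := by
  have hmodd : Odd m := by
    have h2 := hp.out.two_le
    rw [hm]; exact ⟨(p - 3) / 4, by omega⟩
  have hsq : ((s : ZMod p) ^ m) ^ 2 = 1 := by
    rw [← pow_mul]
    have h2 : m * 2 = p - 1 := by have := hp.out.two_le; omega
    rw [h2]
    exact ZMod.pow_card_sub_one_eq_one (by exact_mod_cast s.ne_zero)
  have hpm : (s : ZMod p) ^ m = 1 ∨ (s : ZMod p) ^ m = -1 := by
    rcases mul_eq_zero.mp (show ((s : ZMod p) ^ m - 1) * ((s : ZMod p) ^ m + 1) = 0 by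
      linear_combination hsq) with h | h
    · left; exact sub_eq_zero.mp h
    · right; exact eq_neg_of_add_eq_zero_left h
  have hpow : (pperm hodd hm s) ^ m = 1 := by
    rw [pperm_pow]
    apply Equiv.ext; intro j
    show pf hodd hm ((s ^ m : (ZMod p)ˣ) : ZMod p) j = j
    rw [Units.val_pow_eq_pow_val]
    rcases hpm with h | h
    · rw [h]; exact pf_one hodd hm j
    · rw [h]; exact pf_neg_one hodd hm j
  have hsgn := congrArg Equiv.Perm.sign hpow
  rw [map_pow, map_one] at hsgn
  rcases Int.units_eq_one_or (Equiv.Perm.sign (pperm hodd hm s)) with h | h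
  · exact h
  · rw [h, Odd.neg_one_pow hmodd] at hsgn
    exact absurd hsgn (by decide)

end Perm

lemma coeffs_eq {ζ : ℂ} (hζ : IsPrimitiveRoot ζ p) (e : ZMod p → ℚ)
    (h : ∑ i : ZMod p, (e i : ℂ) * ζ ^ i.val = 0) : ∀ i, e i = e 0 := by
  set R : ℚ[X] := ∑ i : ZMod p, C (e i) * X ^ i.val with hR
  have haev : aeval ζ R = 0 := by
    rw [hR, map_sum]
    simpa using h
  have hmin : minpoly ℚ ζ = cyclotomic p ℚ := (cyclotomic_eq_minpoly_rat hζ hp.out.pos).symm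
  have hdvd : cyclotomic p ℚ ∣ R := hmin ▸ minpoly.dvd ℚ ζ haev
  obtain ⟨q, hq⟩ := hdvd
  have hdegc : (cyclotomic p ℚ).natDegree = p - 1 := by
    rw [natDegree_cyclotomic, Nat.totient_prime hp.out]
  have hdegR : R.natDegree ≤ p - 1 := by
    refine (natDegree_sum_le _ _).trans ?_
    rw [Finset.fold_max_le]
    refine ⟨Nat.zero_le _, fun i _ => ?_⟩
    refine (natDegree_C_mul_le _ _).trans ?_
    rw [natDegree_X_pow]
    have := i.val_lt
    omega
  obtain ⟨cc, hcc⟩ : ∃ cc, C cc = q := by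
    rcases eq_or_ne q 0 with h0 | h0
    · exact ⟨0, by rw [h0, map_zero]⟩
    · have hq0 : q.natDegree = 0 := by
        have hmul := natDegree_mul (cyclotomic_ne_zero p ℚ) h0
        rw [← hq] at hmul
        omega
      exact natDegree_eq_zero.mp hq0
  have hRcoeff : ∀ k : ℕ, k < p → R.coeff k = e ((k : ZMod p)) := by
    intro k hk
    rw [hR, finset_sum_coeff]
    rw [Finset.sum_eq_single ((k : ZMod p))]
    · rw [coeff_C_mul, coeff_X_pow, ZMod.val_natCast_of_lt hk, if_pos rfl, mul_one]
    · intro i _ hne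
      rw [coeff_C_mul, coeff_X_pow]
      have hvk : i.val ≠ k := by
        intro hik
        exact hne (by rw [← hik, ZMod.natCast_val, ZMod.cast_id])
      rw [if_neg (fun hkk => hvk hkk.symm), mul_zero]
    · intro hmem
      exact absurd (Finset.mem_univ _) hmem
  have hcyccoeff : ∀ k : ℕ, k < p → (cyclotomic p ℚ).coeff k = 1 := by
    intro k hk
    rw [cyclotomic_prime, finset_sum_coeff]
    rw [Finset.sum_eq_single k]
    · rw [coeff_X_pow, if_pos rfl]
    · intro i _ hne
      rw [coeff_X_pow, if_neg (fun hkk => hne hkk.symm)]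
    · intro hmem
      rw [Finset.mem_range] at hmem
      omega
  have hval : ∀ i : ZMod p, e i = cc := by
    intro i
    have h1 : R.coeff i.val = e i := by
      rw [hRcoeff i.val i.val_lt, ZMod.natCast_val, ZMod.cast_id]
    have h2 : R.coeff i.val = cc := by
      rw [hq, ← hcc, coeff_mul_C, hcyccoeff i.val i.val_lt, one_mul]
    rw [← h1, h2]
  intro i
  rw [hval i, hval 0]


noncomputable def Ppoly (m : ℕ) : Polynomial ℤ :=
  (Matrix.of fun j k : Fin (m + 1) => (X : Polynomial ℤ) ^ ((j : ℕ) ^ 2 * (k : ℕ) ^ 2)).det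

lemma aeval_Ppoly (m : ℕ) (z : ℂ) :
    aeval z (Ppoly m) =
      (Matrix.of fun j k : Fin (m + 1) => z ^ ((j : ℕ) ^ 2 * (k : ℕ) ^ 2)).det := by
  unfold Ppoly
  have := RingHom.map_det ((aeval z : Polynomial ℤ →ₐ[ℤ] ℂ) : Polynomial ℤ →+* ℂ)
    (Matrix.of fun j k : Fin (m + 1) => (X : Polynomial ℤ) ^ ((j : ℕ) ^ 2 * (k : ℕ) ^ 2))
  simp only [RingHom.coe_coe] at this
  rw [this]
  congr 1
  ext j k
  simp [Matrix.map_apply]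

/-- fiber-sums of coefficients of `Ppoly m` by residue classes mod p -/
noncomputable def cf (m : ℕ) (p : ℕ) : ZMod p → ℤ := fun i =>
  ∑ k ∈ Finset.filter (fun k : ℕ => ((k : ZMod p) = i)) (Finset.range ((Ppoly m).natDegree + 1)),
    (Ppoly m).coeff k

lemma sum_cf (m : ℕ) {z : ℂ} (hz : z ^ p = 1) :
    aeval z (Ppoly m) = ∑ i : ZMod p, (cf m p i : ℂ) * z ^ (ZMod.val i) := by
  have hzpow : ∀ k : ℕ, z ^ k = z ^ (k % p) := by
    intro k
    conv_lhs => rw [← Nat.div_add_mod k p]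
    rw [pow_add, pow_mul, hz, one_pow, one_mul]
  have heval : aeval z (Ppoly m) =
      ∑ k ∈ Finset.range ((Ppoly m).natDegree + 1), ((Ppoly m).coeff k : ℂ) * z ^ k := by
    rw [aeval_def, eval₂_eq_sum_range]
    simp
  rw [heval,
    ← Finset.sum_fiberwise_of_maps_to (g := fun k : ℕ => (k : ZMod p))
      (t := (Finset.univ : Finset (ZMod p))) (fun x _ => Finset.mem_univ _)]
  refine Finset.sum_congr rfl fun i _ => ?_
  rw [cf, Int.cast_sum, Finset.sum_mul]
  refine Finset.sum_congr rfl fun k hk => ?_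
  rw [Finset.mem_filter] at hk
  rw [hzpow k, ← ZMod.val_natCast, hk.2]



lemma pow_congr_mod {z : ℂ} (hz : z ^ p = 1) {a b : ℕ} (h : (a : ZMod p) = (b : ZMod p)) :
    z ^ a = z ^ b := by
  have hzpow : ∀ k : ℕ, z ^ k = z ^ (k % p) := by
    intro k
    conv_lhs => rw [← Nat.div_add_mod k p]
    rw [pow_add, pow_mul, hz, one_pow, one_mul]
  rw [hzpow a, hzpow b, (ZMod.natCast_eq_natCast_iff' _ _ _).mp h]

lemma det_invariance {m : ℕ} (hp4 : p % 4 = 3) (hm : m = (p - 1) / 2)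
    {ζ : ℂ} (hζ : IsPrimitiveRoot ζ p) (s : (ZMod p)ˣ) :
    aeval (ζ ^ (((s : ZMod p) * s).val)) (Ppoly m) = aeval ζ (Ppoly m) := by
  have hodd : p % 2 = 1 := by omega
  rw [aeval_Ppoly, aeval_Ppoly]
  have hentry :
      (Matrix.of fun j k : Fin (m + 1) =>
        (ζ ^ ((s : ZMod p) * s).val) ^ ((j : ℕ) ^ 2 * (k : ℕ) ^ 2))
      = (Matrix.of fun j k : Fin (m + 1) =>
          ζ ^ ((j : ℕ) ^ 2 * (k : ℕ) ^ 2)).submatrix (pperm hodd hm s) id := by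
    ext j k
    simp only [Matrix.of_apply, Matrix.submatrix_apply, id_eq]
    rw [← pow_mul]
    apply pow_congr_mod hζ.pow_eq_one
    have hcoe : (((pperm hodd hm s j : ℕ) : ZMod p)) ^ 2
        = ((s : ZMod p) * ((j : ℕ) : ZMod p)) ^ 2 := rep_sq_cast _
    push_cast
    rw [ZMod.natCast_val, ZMod.cast_id]
    linear_combination -(((k : ℕ) : ZMod p)) ^ 2 * hcoe
  rw [hentry, Matrix.det_permute, sign_pperm hodd hm hp4 s]
  simp

lemma cf_invariant (hp4 : p % 4 = 3) {m : ℕ} (hm : m = (p - 1) / 2) {ζ : ℂ}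
    (hζ : IsPrimitiveRoot ζ p) (s : (ZMod p)ˣ) (j : ZMod p) :
    cf m p ((s : ZMod p) * s * j) = cf m p j := by
  have hz : ζ ^ p = 1 := hζ.pow_eq_one
  set t : ZMod p := (s : ZMod p) * s with ht
  have htne : t ≠ 0 := mul_ne_zero s.ne_zero s.ne_zero
  have hzpow : ∀ k : ℕ, ζ ^ k = ζ ^ (k % p) := by
    intro k
    conv_lhs => rw [← Nat.div_add_mod k p]
    rw [pow_add, pow_mul, hz, one_pow, one_mul]
  have hz2 : (ζ ^ t.val) ^ p = 1 := by
    rw [← pow_mul, mul_comm, pow_mul, hz, one_pow]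
  have h3 : aeval (ζ ^ t.val) (Ppoly m) = aeval ζ (Ppoly m) := det_invariance hp4 hm hζ s
  have h4 : ∑ i : ZMod p, (cf m p i : ℂ) * (ζ ^ t.val) ^ i.val
      = ∑ i : ZMod p, (cf m p (t⁻¹ * i) : ℂ) * ζ ^ i.val := by
    rw [← Equiv.sum_comp (Equiv.mulLeft₀ t htne)
      (fun i => (cf m p (t⁻¹ * i) : ℂ) * ζ ^ i.val)]
    refine Finset.sum_congr rfl fun i _ => ?_
    have happ : (Equiv.mulLeft₀ t htne) i = t * i := rfl
    rw [happ, inv_mul_cancel_left₀ htne]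
    congr 1
    rw [← pow_mul, hzpow (t.val * i.val), ← ZMod.val_mul]
  have h5 : ∑ i : ZMod p, (((cf m p (t⁻¹ * i) - cf m p i : ℤ) : ℚ) : ℂ) * ζ ^ i.val = 0 := by
    have : ∑ i : ZMod p, (((cf m p (t⁻¹ * i) - cf m p i : ℤ) : ℚ) : ℂ) * ζ ^ i.val
        = (∑ i : ZMod p, (cf m p (t⁻¹ * i) : ℂ) * ζ ^ i.val)
          - ∑ i : ZMod p, (cf m p i : ℂ) * ζ ^ i.val := by
      rw [← Finset.sum_sub_distrib]
      refine Finset.sum_congr rfl fun i _ => ?_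
      push_cast
      ring
    rw [this, ← h4, ← sum_cf m hz2, ← sum_cf m hz, h3, sub_self]
  have h6 := coeffs_eq hζ (fun i => ((cf m p (t⁻¹ * i) - cf m p i : ℤ) : ℚ)) h5
  have h6j : ((cf m p (t⁻¹ * (t * j)) - cf m p (t * j) : ℤ) : ℚ)
      = ((cf m p (t⁻¹ * 0) - cf m p 0 : ℤ) : ℚ) := h6 (t * j)
  rw [mul_zero, sub_self, Int.cast_zero] at h6j
  have hfin : cf m p (t⁻¹ * (t * j)) - cf m p (t * j) = 0 := by exact_mod_cast h6j
  rw [inv_mul_cancel_left₀ htne] at hfin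
  omega

end Stmt9Aux

theorem stmt9 (p : ℕ) [hp : Fact p.Prime] (hp4 : p % 4 = 3)
    (m : ℕ) (hm : m = (p - 1) / 2)
    (ζ : ℂ) (hζ : ζ = Complex.exp (2 * Real.pi * Complex.I / p))
    (D : Matrix (Fin (m + 1)) (Fin (m + 1)) ℂ)
    (hD : D = Matrix.of fun (j k : Fin (m + 1)) => ζ ^ ((j : ℕ) ^ 2 * (k : ℕ) ^ 2)) :
    ∃ u v : ℚ, (2 * u).den = 1 ∧ (2 * v).den = 1 ∧
      D.det = (u : ℂ) + (v : ℂ) * Complex.I * Real.sqrt p := by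
  classical
  have h2p : 2 ≤ p := hp.out.two_le
  have hodd : p % 2 = 1 := by omega
  haveI : NeZero p := ⟨hp.out.ne_zero⟩
  have hζprim : IsPrimitiveRoot ζ p := by
    rw [hζ]
    exact Complex.isPrimitiveRoot_exp p hp.out.ne_zero
  have hz : ζ ^ p = 1 := hζprim.pow_eq_one
  have hdet : D.det = Polynomial.aeval ζ (Stmt9Aux.Ppoly m) := by
    rw [hD, Stmt9Aux.aeval_Ppoly]
  have hchar : ringChar (ZMod p) ≠ 2 := by rw [ZMod.ringChar_zmod_n]; omega
  set χ : MulChar (ZMod p) ℤ := quadraticChar (ZMod p) with hχdef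
  set χC : MulChar (ZMod p) ℂ := χ.ringHomComp (Int.castRingHom ℂ) with hχCdef
  set ψ : AddChar (ZMod p) ℂ := AddChar.zmodChar p hz with hψdef
  have hψprim : ψ.IsPrimitive := AddChar.zmodChar_primitive_of_primitive_root p hζprim
  set g : ℂ := gaussSum χC ψ with hgdef
  have hχC1 : χC ≠ 1 :=
    (MulChar.ringHomComp_ne_one_iff (RingHom.injective_int _)).mpr (quadraticChar_ne_one hchar)
  have hquad : χC.IsQuadratic := (quadraticChar_isQuadratic (ZMod p)).comp _
  have hg2 : g ^ 2 = -(p : ℂ) := by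
    rw [hgdef, gaussSum_sq hχC1 hquad hψprim]
    have hm1 : χ (-1) = -1 := by
      rw [hχdef, quadraticChar_neg_one hchar, ZMod.card, ZMod.χ₄_nat_eq_if_mod_four,
        if_neg (by omega), if_neg (by omega)]
    have hm1C : χC (-1) = -1 := by
      rw [hχCdef, MulChar.ringHomComp_apply, hm1]
      simp
    rw [hm1C, ZMod.card]
    ring
  have hsqrt : ((Real.sqrt p : ℝ) : ℂ) ^ 2 = (p : ℂ) := by
    rw [← Complex.ofReal_pow, Real.sq_sqrt (by positivity : (0 : ℝ) ≤ (p : ℝ))]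
    push_cast
    ring
  have hgpm : g = Complex.I * Real.sqrt p ∨ g = -(Complex.I * Real.sqrt p) := by
    have hfac : (g - Complex.I * Real.sqrt p) * (g + Complex.I * Real.sqrt p) = 0 := by
      linear_combination hg2 - ((Real.sqrt p : ℝ) : ℂ) ^ 2 * Complex.I_sq + hsqrt
    rcases mul_eq_zero.mp hfac with h | h
    · left; exact sub_eq_zero.mp h
    · right; exact eq_neg_of_add_eq_zero_left h
  set c : ZMod p → ℤ := Stmt9Aux.cf m p with hcdef
  have hinv : ∀ (s : (ZMod p)ˣ) (j : ZMod p), c ((s : ZMod p) * s * j) = c j :=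
    fun s j => Stmt9Aux.cf_invariant hp4 hm hζprim s j
  obtain ⟨n0, hn0⟩ := FiniteField.exists_nonsquare (F := ZMod p) hchar
  have hn0ne : n0 ≠ 0 := fun h => hn0 (h ▸ ⟨0, (mul_zero 0).symm⟩)
  set a : ℤ := c 1 with hadef
  set b : ℤ := c n0 with hbdef
  set c0 : ℤ := c 0 with hc0def
  have hc_sq : ∀ i : ZMod p, i ≠ 0 → IsSquare i → c i = a := by
    intro i hi hsq
    obtain ⟨y, hy⟩ := hsq
    have hyne : y ≠ 0 := by
      rintro rfl
      rw [mul_zero] at hy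
      exact hi hy
    have h1 := hinv (Units.mk0 y hyne) 1
    simp only [Units.val_mk0, mul_one] at h1
    rw [hadef, ← h1, hy]
  have hc_ns : ∀ i : ZMod p, i ≠ 0 → ¬IsSquare i → c i = b := by
    intro i hi hns
    have hχi : χ i = -1 := quadraticChar_neg_one_iff_not_isSquare.mpr hns
    have hχn : χ n0 = -1 := quadraticChar_neg_one_iff_not_isSquare.mpr hn0
    have hne : i * n0⁻¹ ≠ 0 := mul_ne_zero hi (inv_ne_zero hn0ne)
    have hprod : IsSquare (i * n0⁻¹) := by
      have h1 : χ (i * n0⁻¹) * χ n0 = χ i := by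
        rw [← map_mul]
        congr 1
        field_simp
      rw [hχn, hχi] at h1
      have h2 : χ (i * n0⁻¹) = 1 := by linarith
      exact (quadraticChar_one_iff_isSquare hne).mp h2
    obtain ⟨y, hy⟩ := hprod
    have hyne : y ≠ 0 := by
      rintro rfl
      rw [mul_zero] at hy
      exact hne hy
    have hiy : i = y * y * n0 := by
      field_simp at hy
      linear_combination hy
    have h1 := hinv (Units.mk0 y hyne) n0
    simp only [Units.val_mk0] at h1
    rw [hbdef, hiy, h1]
  have hgsum : g = ∑ i : ZMod p, ((χ i : ℤ) : ℂ) * ζ ^ i.val := by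
    rw [hgdef, gaussSum]
    refine Finset.sum_congr rfl fun i _ => ?_
    rw [hχCdef, MulChar.ringHomComp_apply, hψdef, AddChar.zmodChar_apply]
    simp
  have hTsum : ∑ i : ZMod p, ζ ^ i.val = 0 := by
    have hψne : ψ ≠ 1 := by
      rw [AddChar.zmod_char_ne_one_iff]
      rw [hψdef, AddChar.zmodChar_apply]
      have : ((1 : ZMod p)).val = 1 := ZMod.val_one p
      rw [this, pow_one]
      exact hζprim.ne_one (by omega)
    have := AddChar.sum_eq_zero_of_ne_one hψne
    rw [hψdef] at this
    simpa [AddChar.zmodChar_apply] using this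
  have hpt : ∀ i : ZMod p, 2 * (c i : ℂ) * ζ ^ i.val
      = ((a : ℂ) + b) * ζ ^ i.val + ((a : ℂ) - b) * ((χ i : ℤ) : ℂ) * ζ ^ i.val
        + (if i = 0 then (2 * (c0 : ℂ) - a - b) else 0) := by
    intro i
    rcases eq_or_ne i 0 with rfl | hi
    · rw [if_pos rfl]
      have hq0 : χ (0 : ZMod p) = 0 := quadraticChar_zero
      rw [hq0, ZMod.val_zero, pow_zero]
      push_cast
      ring
    · rw [if_neg hi]
      by_cases hsq : IsSquare i
      · rw [hc_sq i hi hsq, (quadraticChar_one_iff_isSquare hi).mpr hsq]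
        push_cast
        ring
      · rw [hc_ns i hi hsq, quadraticChar_neg_one_iff_not_isSquare.mpr hsq]
        push_cast
        ring
  have hsum : 2 * Polynomial.aeval ζ (Stmt9Aux.Ppoly m)
      = ((a : ℂ) - b) * g + (2 * (c0 : ℂ) - a - b) := by
    rw [Stmt9Aux.sum_cf m hz, Finset.mul_sum]
    calc ∑ i : ZMod p, 2 * ((c i : ℂ) * ζ ^ i.val)
        = ∑ i : ZMod p, (((a : ℂ) + b) * ζ ^ i.val
            + ((a : ℂ) - b) * ((χ i : ℤ) : ℂ) * ζ ^ i.val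
            + (if i = 0 then (2 * (c0 : ℂ) - a - b) else 0)) := by
          refine Finset.sum_congr rfl fun i _ => ?_
          rw [← mul_assoc]
          exact hpt i
      _ = ((a : ℂ) - b) * g + (2 * (c0 : ℂ) - a - b) := by
          rw [Finset.sum_add_distrib, Finset.sum_add_distrib, ← Finset.mul_sum, hTsum, mul_zero,
            zero_add]
          congr 1
          · rw [hgsum, Finset.mul_sum]
            refine Finset.sum_congr rfl fun i _ => by ring
          · rw [Finset.sum_ite_eq' Finset.univ (0 : ZMod p)]
            simp
  have hden1 : ∀ z : ℤ, (2 * ((z : ℚ) / 2)).den = 1 := by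
    intro z
    rw [show (2 : ℚ) * ((z : ℚ) / 2) = (z : ℚ) by ring]
    exact Rat.den_intCast z
  rcases hgpm with hge | hge
  · refine ⟨((2 * c0 - a - b : ℤ) : ℚ) / 2, ((a - b : ℤ) : ℚ) / 2, ?_, ?_, ?_⟩
    · exact hden1 _
    · exact hden1 _
    · rw [hdet]
      push_cast
      linear_combination hsum / 2 + (((a : ℂ) - b) / 2) * hge
  · refine ⟨((2 * c0 - a - b : ℤ) : ℚ) / 2, ((b - a : ℤ) : ℚ) / 2, ?_, ?_, ?_⟩
    · exact hden1 _
    · exact hden1 _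
    · rw [hdet]
      push_cast
      linear_combination hsum / 2 + (((a : ℂ) - b) / 2) * hge
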